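/- Let m₀, m₀' ∈ L^∞(𝕋) be non-singular, h, h' ∈ L¹(𝕋) nonnegative with R_{m₀,m₀}h = h, R_{m₀',m₀'}h' = h', and h₀ ∈ L¹(𝕋) with R_{m₀,m₀'}h₀ = h₀. Suppose for i = 1, 2 that (πᵢ, Uᵢ, Hᵢ, φᵢ) are cyclic representations associated to h, that (πᵢ', Uᵢ', Hᵢ', φᵢ') are cyclic representations associated to h', and that Sᵢ : Hᵢ' → Hᵢ are bounded operators with Sᵢ πᵢ'(f) = πᵢ(f) Sᵢ for all f ∈ L^∞(𝕋), Sᵢ Uᵢ' = Uᵢ Sᵢ, and ⟨φᵢ, Sᵢ πᵢ'(f) φᵢ'⟩ = ∫_𝕋 f h₀ dμ for all f ∈ L^∞(𝕋). Then there exist unique unitary isomorphisms W : H₁ → H₂ and W' : H₁' → H₂' such that W π₁(f) = π₂(f) W and W' π₁'(f) = π₂'(f) W' for all f ∈ L^∞(𝕋), W U₁ = U₂ W, W' U₁' = U₂' W', W φ₁ = φ₂, W' φ₁' = φ₂', and S₂ W' = W S₁. -/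

import Mathlib

noncomputable section

open MeasureTheory Complex
open scoped ComplexConjugate ComplexInnerProductSpace

/-- An element of `L^∞(𝕋)`, realized as a bounded measurable 2π-periodic function on ℝ. -/
def IsFilter (f : ℝ → ℂ) : Prop :=
  Measurable f ∧ (∃ C : ℝ, ∀ x, ‖f x‖ ≤ C) ∧ ∀ x, f (x + 2 * Real.pi) = f x

/-- `m₀` is non-singular: it does not vanish on a set of positive measure. -/
def NonSingular (m : ℝ → ℂ) : Prop := ∀ᵐ x ∂(volume : Measure ℝ), m x ≠ 0

/-- The Ruelle transfer operator `R_{m₀,m₀'}` at scale `N`, written for 2π-periodic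
functions on ℝ. -/
def ruelle (N : ℕ) (m₀ m₀' : ℝ → ℂ) (f : ℝ → ℂ) : ℝ → ℂ := fun ω =>
  (N : ℂ)⁻¹ * ∑ l ∈ Finset.range N,
    conj (m₀ ((ω + 2 * Real.pi * l) / N)) * m₀' ((ω + 2 * Real.pi * l) / N) *
      f ((ω + 2 * Real.pi * l) / N)

/-- `h ∈ L¹(𝕋)`, as a 2π-periodic locally integrable function on ℝ. -/
def MemL1T (f : ℝ → ℂ) : Prop :=
  MeasureTheory.IntegrableOn f (Set.Ioc 0 (2 * Real.pi)) volume ∧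
    ∀ x, f (x + 2 * Real.pi) = f x

/-- The normalized integral over the circle: `∫_𝕋 f dμ = (2π)⁻¹ ∫_0^{2π} f`. -/
def circleInt (f : ℝ → ℂ) : ℂ :=
  (((2 * Real.pi)⁻¹ : ℝ) : ℂ) * ∫ x in Set.Ioc (0:ℝ) (2 * Real.pi), f x

/-- A (normal) covariant representation of the algebra `𝔄_N`: a unitary `U` on a complex
Hilbert space `H` together with a unital *-representation `rep` of `L^∞(𝕋)` satisfying
`U rep(f) U⁻¹ = rep(f(z^N))`. -/
structure CovRep (N : ℕ) (H : Type*) [NormedAddCommGroup H] [InnerProductSpace ℂ H]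
    [CompleteSpace H] where
  U : H ≃ₗᵢ[ℂ] H
  rep : (ℝ → ℂ) → H →L[ℂ] H
  rep_one : rep 1 = 1
  rep_add : ∀ f g, IsFilter f → IsFilter g → rep (f + g) = rep f + rep g
  rep_smul : ∀ (c : ℂ) (f), IsFilter f → rep (c • f) = c • rep f
  rep_mul : ∀ f g, IsFilter f → IsFilter g → rep (f * g) = (rep f).comp (rep g)
  rep_star : ∀ f, IsFilter f →
    rep (fun x => conj (f x)) = ContinuousLinearMap.adjoint (rep f)
  covariant : ∀ f, IsFilter f → ∀ v : H, U (rep f v) = rep (fun x => f ((N : ℝ) * x)) (U v)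

/-- The cyclic representation of `𝔄_N` associated to an eigenfunction `h ≥ 0`,
`R_{m₀,m₀}h = h`: a covariant representation with a cyclic vector `phi` satisfying the
scaling relation `U phi = rep(m₀) phi` and `⟪phi, rep(f) phi⟫ = ∫_𝕋 f h dμ`. -/
structure CyclicRep (N : ℕ) (m₀ : ℝ → ℂ) (h : ℝ → ℝ) (H : Type*) [NormedAddCommGroup H]
    [InnerProductSpace ℂ H] [CompleteSpace H] extends CovRep N H where
  phi : H
  scaling : U phi = rep m₀ phi
  moment : ∀ f, IsFilter f → ⟪phi, rep f phi⟫ = circleInt fun x => f x * (h x : ℂ)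
  cyclic : Dense (Submodule.span ℂ
    {v : H | ∃ (n : ℕ) (f : ℝ → ℂ), IsFilter f ∧
      v = (fun w => U.symm w)^[n] (rep f phi)} : Set H)

section Aux

variable {N : ℕ}

lemma isFilter_one : IsFilter (1 : ℝ → ℂ) :=
  ⟨measurable_const, ⟨1, fun _ => by simp⟩, fun _ => rfl⟩

lemma IsFilter.mul {f g : ℝ → ℂ} (hf : IsFilter f) (hg : IsFilter g) : IsFilter (f * g) := by
  obtain ⟨mf, ⟨C, hC⟩, pf⟩ := hf
  obtain ⟨mg, ⟨D, hD⟩, pg⟩ := hg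
  refine ⟨mf.mul mg, ⟨C * D, fun x => ?_⟩, fun x => by simp [Pi.mul_apply, pf x, pg x]⟩
  calc ‖f x * g x‖ = ‖f x‖ * ‖g x‖ := norm_mul _ _
    _ ≤ C * D := mul_le_mul (hC x) (hD x) (norm_nonneg _) ((norm_nonneg _).trans (hC x))

lemma IsFilter.conj' {f : ℝ → ℂ} (hf : IsFilter f) : IsFilter (fun x => conj (f x)) := by
  obtain ⟨mf, ⟨C, hC⟩, pf⟩ := hf
  exact ⟨Complex.continuous_conj.measurable.comp mf, ⟨C, fun x => by simpa using hC x⟩,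
    fun x => by simp [pf x]⟩

/-- dilation by N^k -/
def dil (N : ℕ) (k : ℕ) (f : ℝ → ℂ) : ℝ → ℂ := fun x => f ((N : ℝ) ^ k * x)

lemma dil_zero (f : ℝ → ℂ) : dil N 0 f = f := by
  funext x; simp [dil]

lemma dil_dil (k : ℕ) (f : ℝ → ℂ) : dil N k (dil N 1 f) = dil N (k + 1) f := by
  funext x; simp only [dil]; congr 1; ring

lemma IsFilter.dil' {f : ℝ → ℂ} (hf : IsFilter f) (k : ℕ) : IsFilter (dil N k f) := by
  obtain ⟨mf, ⟨C, hC⟩, pf⟩ := hf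
  refine ⟨mf.comp (measurable_const_mul _), ⟨C, fun x => hC _⟩, fun x => ?_⟩
  have per : Function.Periodic f (2 * Real.pi) := pf
  have := (per.nat_mul (N ^ k)) ((N : ℝ) ^ k * x)
  simp only [dil, mul_add]
  rw [show (N : ℝ) ^ k * (2 * Real.pi) = (↑(N ^ k) : ℝ) * (2 * Real.pi) by push_cast; ring]
  exact this

/-- product m₀(x) m₀(Nx) ⋯ m₀(N^{k-1}x) -/
def mp (N : ℕ) (m₀ : ℝ → ℂ) (k : ℕ) : ℝ → ℂ := fun x =>
  ∏ j ∈ Finset.range k, m₀ ((N : ℝ) ^ j * x)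

lemma mp_zero (m₀ : ℝ → ℂ) : mp N m₀ 0 = 1 := by funext x; simp [mp]

lemma mp_succ (m₀ : ℝ → ℂ) (k : ℕ) : mp N m₀ (k + 1) = dil N k m₀ * mp N m₀ k := by
  funext x; simp [mp, dil, Finset.prod_range_succ, mul_comm]

lemma IsFilter.mp' {m₀ : ℝ → ℂ} (hm : IsFilter m₀) (k : ℕ) : IsFilter (mp N m₀ k) := by
  induction k with
  | zero => rw [mp_zero]; exact isFilter_one
  | succ k ih => rw [mp_succ]; exact (hm.dil' k).mul ih

end Aux
section RepLemmas

variable {H : Type*} [NormedAddCommGroup H] [InnerProductSpace ℂ H] [CompleteSpace H]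
variable {N : ℕ} {m₀ : ℝ → ℂ} {h : ℝ → ℝ}

/-- generator vectors -/
def gen (ρ : CyclicRep N m₀ h H) (n : ℕ) (f : ℝ → ℂ) : H :=
  (fun w => ρ.U.symm w)^[n] (ρ.rep f ρ.phi)

lemma gen_zero (ρ : CyclicRep N m₀ h H) (f : ℝ → ℂ) : gen ρ 0 f = ρ.rep f ρ.phi := rfl

lemma gen_succ (ρ : CyclicRep N m₀ h H) (n : ℕ) (f : ℝ → ℂ) :
    gen ρ (n + 1) f = ρ.U.symm (gen ρ n f) := by
  simp [gen, Function.iterate_succ_apply']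

lemma gen_one_eq_phi (ρ : CyclicRep N m₀ h H) : gen ρ 0 1 = ρ.phi := by
  rw [gen_zero, ρ.rep_one]; rfl

lemma rep_apply_mul (ρ : CyclicRep N m₀ h H) {f g : ℝ → ℂ} (hf : IsFilter f) (hg : IsFilter g)
    (v : H) : ρ.rep (f * g) v = ρ.rep f (ρ.rep g v) := by
  rw [ρ.rep_mul f g hf hg]; rfl

lemma U_gen_succ (ρ : CyclicRep N m₀ h H) (n : ℕ) (f : ℝ → ℂ) :
    ρ.U (gen ρ (n + 1) f) = gen ρ n f := by
  rw [gen_succ]; exact ρ.U.apply_symm_apply _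

/-- iterate of U -/
def Upw (ρ : CyclicRep N m₀ h H) (k : ℕ) (v : H) : H := (fun w => ρ.U w)^[k] v

lemma Upw_rep (ρ : CyclicRep N m₀ h H) {f : ℝ → ℂ} (hf : IsFilter f) (k : ℕ) (v : H) :
    Upw ρ k (ρ.rep f v) = ρ.rep (dil N k f) (Upw ρ k v) := by
  induction k with
  | zero => simp [Upw, dil_zero]
  | succ k ih =>
    simp only [Upw, Function.iterate_succ_apply'] at *
    rw [ih, ρ.covariant _ (hf.dil' k)]
    congr 2
    funext x; simp only [dil]; congr 1; ring

lemma Upw_phi (ρ : CyclicRep N m₀ h H) (hm : IsFilter m₀) (k : ℕ) :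
    Upw ρ k ρ.phi = ρ.rep (mp N m₀ k) ρ.phi := by
  induction k with
  | zero => simp [Upw, mp_zero, ρ.rep_one]
  | succ k ih =>
    have h1 : Upw ρ (k+1) ρ.phi = ρ.U (Upw ρ k ρ.phi) := by
      simp [Upw, Function.iterate_succ_apply']
    have hA : (fun x => mp N m₀ k ((N:ℝ) * x)) = dil N 1 (mp N m₀ k) := by
      funext x; simp [dil, pow_one]
    have hAf : IsFilter (fun x => mp N m₀ k ((N:ℝ) * x)) := by
      rw [hA]; exact (hm.mp' k).dil' 1
    rw [h1, ih, ρ.covariant _ (hm.mp' k), ρ.scaling, ← rep_apply_mul ρ hAf hm]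
    congr 2
    funext x
    simp only [Pi.mul_apply, mp, Finset.prod_range_succ']
    congr 1
    · apply Finset.prod_congr rfl; intro j _; congr 1; push_cast; ring
    · rw [pow_zero, one_mul]

end RepLemmas
section InnerLemmas

variable {H : Type*} [NormedAddCommGroup H] [InnerProductSpace ℂ H] [CompleteSpace H]
variable {N : ℕ} {m₀ : ℝ → ℂ} {h : ℝ → ℝ}

lemma inner_symm_iter (ρ : CyclicRep N m₀ h H) (k : ℕ) (a b : H) :
    ⟪(fun w => ρ.U.symm w)^[k] a, b⟫ = ⟪a, Upw ρ k b⟫ := by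
  induction k generalizing a b with
  | zero => rfl
  | succ k ih =>
    rw [Function.iterate_succ_apply]
    calc ⟪(fun w => ρ.U.symm w)^[k] (ρ.U.symm a), b⟫ = ⟪ρ.U.symm a, Upw ρ k b⟫ := ih _ _
      _ = ⟪ρ.U (ρ.U.symm a), ρ.U (Upw ρ k b)⟫ := (ρ.U.inner_map_map _ _).symm
      _ = ⟪a, Upw ρ (k+1) b⟫ := by
          rw [ρ.U.apply_symm_apply]
          congr 1
          simp [Upw, Function.iterate_succ_apply']

lemma inner_iter_iter (ρ : CyclicRep N m₀ h H) (k : ℕ) (a b : H) :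
    ⟪(fun w => ρ.U.symm w)^[k] a, (fun w => ρ.U.symm w)^[k] b⟫ = ⟪a, b⟫ := by
  induction k with
  | zero => rfl
  | succ k ih =>
    rw [Function.iterate_succ_apply', Function.iterate_succ_apply',
      ρ.U.symm.inner_map_map]
    exact ih

lemma inner_rep_left (ρ : CyclicRep N m₀ h H) {f : ℝ → ℂ} (hf : IsFilter f) (x y : H) :
    ⟪ρ.rep f x, y⟫ = ⟪x, ρ.rep (fun t => conj (f t)) y⟫ := by
  rw [ρ.rep_star f hf, ContinuousLinearMap.adjoint_inner_right]

/-- the model values of inner products of generator vectors -/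
def gram (N : ℕ) (m₀ : ℝ → ℂ) (h : ℝ → ℝ) (n m : ℕ) (f g : ℝ → ℂ) : ℂ :=
  if m ≤ n then
    circleInt fun x => (conj (f x) * ((dil N (n - m) g * mp N m₀ (n - m)) x)) * (h x : ℂ)
  else
    conj (circleInt fun x => (conj (g x) * ((dil N (m - n) f * mp N m₀ (m - n)) x)) * (h x : ℂ))

lemma inner_gen_zero (ρ : CyclicRep N m₀ h H) (hm : IsFilter m₀) (k : ℕ) {f g : ℝ → ℂ}
    (hf : IsFilter f) (hg : IsFilter g) :
    ⟪gen ρ k f, gen ρ 0 g⟫ =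
      circleInt fun x => (conj (f x) * ((dil N k g * mp N m₀ k) x)) * (h x : ℂ) := by
  have hG : IsFilter (dil N k g * mp N m₀ k) := (hg.dil' k).mul (hm.mp' k)
  have step1 : ⟪gen ρ k f, gen ρ 0 g⟫ = ⟪ρ.rep f ρ.phi, ρ.rep (dil N k g * mp N m₀ k) ρ.phi⟫ := by
    rw [gen, gen_zero, inner_symm_iter, Upw_rep ρ hg, Upw_phi ρ hm, ← rep_apply_mul ρ (hg.dil' k) (hm.mp' k)]
  rw [step1, inner_rep_left ρ hf, ← rep_apply_mul ρ hf.conj' hG,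
    ρ.moment _ (hf.conj'.mul hG)]
  rfl

lemma inner_gen (ρ : CyclicRep N m₀ h H) (hm : IsFilter m₀) (n m : ℕ) {f g : ℝ → ℂ}
    (hf : IsFilter f) (hg : IsFilter g) :
    ⟪gen ρ n f, gen ρ m g⟫ = gram N m₀ h n m f g := by
  rcases le_or_gt m n with hmn | hmn
  · have hn : n = m + (n - m) := by omega
    have e1 : gen ρ n f = (fun w => ρ.U.symm w)^[m] (gen ρ (n - m) f) := by
      have hmm : m + (n - m) = n := by omega
      rw [gen, gen, ← Function.iterate_add_apply, hmm]
    have e2 : gen ρ m g = (fun w => ρ.U.symm w)^[m] (gen ρ 0 g) := rfl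
    rw [e1, e2, inner_iter_iter, inner_gen_zero ρ hm _ hf hg, gram, if_pos hmn]
  · have e0 : ⟪gen ρ n f, gen ρ m g⟫ = conj ⟪gen ρ m g, gen ρ n f⟫ := (inner_conj_symm _ _).symm
    have hn : m = n + (m - n) := by omega
    have e1 : gen ρ m g = (fun w => ρ.U.symm w)^[n] (gen ρ (m - n) g) := by
      have hmm : n + (m - n) = m := by omega
      rw [gen, gen, ← Function.iterate_add_apply, hmm]
    have e2 : gen ρ n f = (fun w => ρ.U.symm w)^[n] (gen ρ 0 f) := rfl
    rw [e0, e1, e2, inner_iter_iter, inner_gen_zero ρ hm _ hg hf, gram, if_neg (by omega)]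

lemma rep_symm (ρ : CyclicRep N m₀ h H) {f : ℝ → ℂ} (hf : IsFilter f) (w : H) :
    ρ.rep f (ρ.U.symm w) = ρ.U.symm (ρ.rep (dil N 1 f) w) := by
  apply ρ.U.injective
  rw [ρ.U.apply_symm_apply, ρ.covariant _ hf, ρ.U.apply_symm_apply]
  congr 2
  funext x; simp [dil, pow_one]

lemma rep_gen (ρ : CyclicRep N m₀ h H) (n : ℕ) {f g : ℝ → ℂ} (hf : IsFilter f)
    (hg : IsFilter g) : ρ.rep f (gen ρ n g) = gen ρ n (dil N n f * g) := by
  induction n generalizing f with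
  | zero => rw [gen_zero, gen_zero, dil_zero, rep_apply_mul ρ hf hg]
  | succ n ih =>
    rw [gen_succ, rep_symm ρ hf, ih (hf.dil' 1), gen_succ, dil_dil]

lemma U_gen_zero (ρ : CyclicRep N m₀ h H) (hm : IsFilter m₀) {g : ℝ → ℂ} (hg : IsFilter g) :
    ρ.U (gen ρ 0 g) = gen ρ 0 (dil N 1 g * m₀) := by
  have e : (fun x => g ((N:ℝ) * x)) = dil N 1 g := by funext x; simp [dil, pow_one]
  rw [gen_zero, gen_zero, ρ.covariant _ hg, ρ.scaling, e, ← rep_apply_mul ρ (hg.dil' 1) hm]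

end InnerLemmas
section DenseHelpers

variable {H K : Type*} [NormedAddCommGroup H] [InnerProductSpace ℂ H] [CompleteSpace H]
  [NormedAddCommGroup K] [InnerProductSpace ℂ K] [CompleteSpace K]

lemma clm_eq_zero_of_dense_span {T : H →L[ℂ] K} {s : Set H}
    (hd : Dense ((Submodule.span ℂ s : Submodule ℂ H) : Set H))
    (hs : ∀ v ∈ s, T v = 0) : T = 0 := by
  have h1 : Submodule.span ℂ s ≤ T.ker :=
    Submodule.span_le.mpr fun v hv => LinearMap.mem_ker.mpr (hs v hv)
  have h2 : IsClosed (T.ker : Set H) := ContinuousLinearMap.isClosed_ker T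
  ext v
  have hv : v ∈ closure ((Submodule.span ℂ s : Submodule ℂ H) : Set H) := by
    rw [hd.closure_eq]; trivial
  have : v ∈ (T.ker : Set H) := by
    rw [← h2.closure_eq]
    exact closure_mono h1 hv
  simpa using this

lemma clm_eq_on_dense_span {T T' : H →L[ℂ] K} {s : Set H}
    (hd : Dense ((Submodule.span ℂ s : Submodule ℂ H) : Set H))
    (hs : ∀ v ∈ s, T v = T' v) : T = T' := by
  have : T - T' = 0 := clm_eq_zero_of_dense_span hd fun v hv => by
    simp [ContinuousLinearMap.sub_apply, hs v hv]
  have h := congrArg (· + T') this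
  simpa using h

lemma vec_eq_zero_of_inner_dense_span {d : K} {s : Set K}
    (hd : Dense ((Submodule.span ℂ s : Submodule ℂ K) : Set K))
    (hs : ∀ v ∈ s, ⟪v, d⟫ = 0) : d = 0 := by
  have : (innerSL ℂ d : K →L[ℂ] ℂ) = 0 := by
    apply clm_eq_zero_of_dense_span hd
    intro v hv
    have := hs v hv
    have h2 : ⟪d, v⟫ = 0 := by
      rw [← inner_conj_symm, this, map_zero]
    simpa [innerSL_apply_apply] using h2
  have := congrFun (congrArg (fun (T : K →L[ℂ] ℂ) => (T : K → ℂ)) this) d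
  simp only [innerSL_apply_apply, ContinuousLinearMap.zero_apply] at this
  exact inner_self_eq_zero.mp this

lemma inner_linearCombination {ι : Type*} (g : ι → H) (g' : ι → K)
    (hg : ∀ p q, ⟪g p, g q⟫ = ⟪g' p, g' q⟫) (x y : ι →₀ ℂ) :
    ⟪Finsupp.linearCombination ℂ g x, Finsupp.linearCombination ℂ g y⟫ =
      ⟪Finsupp.linearCombination ℂ g' x, Finsupp.linearCombination ℂ g' y⟫ := by
  simp only [Finsupp.linearCombination_apply, Finsupp.sum, sum_inner, inner_sum,
    inner_smul_left, inner_smul_right, hg]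

end DenseHelpers
section Construction

variable {H K : Type*} [NormedAddCommGroup H] [InnerProductSpace ℂ H] [CompleteSpace H]
  [NormedAddCommGroup K] [InnerProductSpace ℂ K] [CompleteSpace K]
variable {N : ℕ} {m₀ : ℝ → ℂ} {h : ℝ → ℝ}

/-- the cyclic generating set -/
def genSet (ρ : CyclicRep N m₀ h H) : Set H :=
  {v : H | ∃ (n : ℕ) (f : ℝ → ℂ), IsFilter f ∧ v = (fun w => ρ.U.symm w)^[n] (ρ.rep f ρ.phi)}

lemma dense_genSet (ρ : CyclicRep N m₀ h H) :
    Dense ((Submodule.span ℂ (genSet ρ) : Submodule ℂ H) : Set H) := ρ.cyclic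

lemma gen_mem_genSet (ρ : CyclicRep N m₀ h H) (n : ℕ) {f : ℝ → ℂ} (hf : IsFilter f) :
    gen ρ n f ∈ genSet ρ := ⟨n, f, hf, rfl⟩

lemma genSet_eq (ρ : CyclicRep N m₀ h H) {v : H} (hv : v ∈ genSet ρ) :
    ∃ (n : ℕ) (f : ℝ → ℂ), IsFilter f ∧ v = gen ρ n f := hv

lemma exists_clm (hm : IsFilter m₀) (ρ : CyclicRep N m₀ h H) (σ : CyclicRep N m₀ h K) :
    ∃ T : H →L[ℂ] K, (∀ (n : ℕ) (f : ℝ → ℂ), IsFilter f → T (gen ρ n f) = gen σ n f) ∧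
      ∀ v, ‖T v‖ = ‖v‖ := by
  classical
  set gv : (ℕ × (ℝ → ℂ)) → H := fun p => if IsFilter p.2 then gen ρ p.1 p.2 else 0 with hgv
  set gw : (ℕ × (ℝ → ℂ)) → K := fun p => if IsFilter p.2 then gen σ p.1 p.2 else 0 with hgw
  have hgram : ∀ p q, ⟪gv p, gv q⟫ = ⟪gw p, gw q⟫ := by
    intro p q
    by_cases hp : IsFilter p.2
    · by_cases hq : IsFilter q.2
      · simp only [hgv, hgw, if_pos hp, if_pos hq]
        rw [inner_gen ρ hm _ _ hp hq, inner_gen σ hm _ _ hp hq]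
      · simp [hgv, hgw, hp, hq]
    · simp [hgv, hgw, hp]
  set A : ((ℕ × (ℝ → ℂ)) →₀ ℂ) →ₗ[ℂ] H := Finsupp.linearCombination ℂ gv with hA
  set B : ((ℕ × (ℝ → ℂ)) →₀ ℂ) →ₗ[ℂ] K := Finsupp.linearCombination ℂ gw with hB
  have hinner : ∀ x y, ⟪A x, A y⟫ = ⟪B x, B y⟫ := inner_linearCombination gv gw hgram
  have hnorm : ∀ x, ‖A x‖ = ‖B x‖ := by
    intro x
    have h1 : ⟪A x, A x⟫ = ⟪B x, B x⟫ := hinner x x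
    rw [inner_self_eq_norm_sq_to_K, inner_self_eq_norm_sq_to_K] at h1
    have h2 : (‖A x‖ : ℝ) ^ 2 = (‖B x‖ : ℝ) ^ 2 := by exact_mod_cast h1
    nlinarith [norm_nonneg (A x), norm_nonneg (B x)]
  have hker : LinearMap.ker A ≤ LinearMap.ker B := by
    intro x hx
    rw [LinearMap.mem_ker] at hx ⊢
    rw [← norm_eq_zero, ← hnorm, hx, norm_zero]
  set Bbar : (((ℕ × (ℝ → ℂ)) →₀ ℂ) ⧸ LinearMap.ker A) →ₗ[ℂ] K :=
    Submodule.liftQ _ B hker with hBbar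
  set e := A.quotKerEquivRange with he
  set W₀ : LinearMap.range A →ₗ[ℂ] K := Bbar ∘ₗ (e.symm : _ →ₗ[ℂ] _) with hW₀def
  have hW₀ : ∀ x, W₀ ⟨A x, LinearMap.mem_range_self A x⟩ = B x := by
    intro x
    show Bbar (e.symm ⟨A x, _⟩) = B x
    rw [he, A.quotKerEquivRange_symm_apply_image]
    exact Submodule.liftQ_apply _ B x
  have hW₀norm : ∀ v : LinearMap.range A, ‖W₀ v‖ = ‖v‖ := by
    rintro ⟨v, hv⟩
    obtain ⟨x, rfl⟩ := hv
    have := hW₀ x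
    calc ‖W₀ ⟨A x, _⟩‖ = ‖B x‖ := by rw [hW₀ x]
      _ = ‖A x‖ := (hnorm x).symm
      _ = ‖(⟨A x, LinearMap.mem_range_self A x⟩ : LinearMap.range A)‖ := rfl
  set J : LinearMap.range A →ₗᵢ[ℂ] K := ⟨W₀, hW₀norm⟩ with hJ
  have hr : LinearMap.range A = Submodule.span ℂ (genSet ρ) := by
    rw [hA, Finsupp.range_linearCombination]
    apply le_antisymm
    · rw [Submodule.span_le]
      rintro _ ⟨p, rfl⟩
      by_cases hp : IsFilter p.2
      · exact Submodule.subset_span ⟨p.1, p.2, hp, by simp [hgv, hp, gen]⟩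
      · simp only [hgv, hp, if_false]
        exact Submodule.zero_mem _
    · rw [Submodule.span_le]
      rintro v ⟨n, f, hf, rfl⟩
      exact Submodule.subset_span ⟨(n, f), by simp [hgv, hf, gen]⟩
  have hd : Dense ((LinearMap.range A : Submodule ℂ H) : Set H) := by
    rw [hr]; exact dense_genSet ρ
  set e₁ : (LinearMap.range A : Submodule ℂ H) →L[ℂ] H := (LinearMap.range A).subtypeL with he₁
  have hdr : DenseRange e₁ := by
    have : Set.range (e₁ : _ → H) = (LinearMap.range A : Set H) := Subtype.range_val
    rw [DenseRange, this]
    exact hd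
  have hui : IsUniformInducing (e₁ : _ → H) := isometry_subtype_coe.isUniformInducing
  set T : H →L[ℂ] K := ContinuousLinearMap.extend J.toContinuousLinearMap e₁ with hT
  have hTA : ∀ x, T (A x) = B x := by
    intro x
    have : A x = e₁ ⟨A x, LinearMap.mem_range_self A x⟩ := rfl
    rw [this, hT, ContinuousLinearMap.extend_eq (h_dense := hdr) (h_e := hui)]
    exact hW₀ x
  have hTnorm : ∀ v, ‖T v‖ = ‖v‖ := by
    have : (fun v => ‖T v‖) = fun v => ‖v‖ := by
      apply Continuous.ext_on hd (continuous_norm.comp T.continuous) continuous_norm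
      rintro v hv
      obtain ⟨x, rfl⟩ := (LinearMap.mem_range).mp hv
      show ‖T (A x)‖ = ‖A x‖
      rw [hTA x, hnorm x]
    exact fun v => congrFun this v
  refine ⟨T, fun n f hf => ?_, hTnorm⟩
  have hsing : A (Finsupp.single (n, f) 1) = gen ρ n f := by
    rw [hA, Finsupp.linearCombination_single, one_smul, hgv]
    simp [hf]
  have hsing' : B (Finsupp.single (n, f) 1) = gen σ n f := by
    rw [hB, Finsupp.linearCombination_single, one_smul, hgw]
    simp [hf]
  rw [← hsing, hTA, hsing']

end Construction
section Unitary

variable {H K : Type*} [NormedAddCommGroup H] [InnerProductSpace ℂ H] [CompleteSpace H]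
  [NormedAddCommGroup K] [InnerProductSpace ℂ K] [CompleteSpace K]
variable {N : ℕ} {m₀ : ℝ → ℂ} {h : ℝ → ℝ}

lemma map_gen_of_props (ρ : CyclicRep N m₀ h H) (σ : CyclicRep N m₀ h K) (W : H ≃ₗᵢ[ℂ] K)
    (hrep : ∀ f, IsFilter f → ∀ v, W (ρ.rep f v) = σ.rep f (W v))
    (hU : ∀ v, W (ρ.U v) = σ.U (W v)) (hphi : W ρ.phi = σ.phi) :
    ∀ (n : ℕ) (f : ℝ → ℂ), IsFilter f → W (gen ρ n f) = gen σ n f := by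
  have hUsymm : ∀ v, W (ρ.U.symm v) = σ.U.symm (W v) := by
    intro v
    apply σ.U.injective
    rw [← hU, ρ.U.apply_symm_apply, σ.U.apply_symm_apply]
  intro n f hf
  induction n with
  | zero => rw [gen_zero, gen_zero, hrep f hf, hphi]
  | succ n ih => rw [gen_succ, gen_succ, hUsymm, ih]

lemma unitary_exists (hm : IsFilter m₀) (ρ : CyclicRep N m₀ h H) (σ : CyclicRep N m₀ h K) :
    ∃ W : H ≃ₗᵢ[ℂ] K,
      (∀ f, IsFilter f → ∀ v, W (ρ.rep f v) = σ.rep f (W v)) ∧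
      (∀ v, W (ρ.U v) = σ.U (W v)) ∧ W ρ.phi = σ.phi ∧
      (∀ (n : ℕ) (f : ℝ → ℂ), IsFilter f → W (gen ρ n f) = gen σ n f) ∧
      (∀ W₂ : H ≃ₗᵢ[ℂ] K, (∀ f, IsFilter f → ∀ v, W₂ (ρ.rep f v) = σ.rep f (W₂ v)) →
        (∀ v, W₂ (ρ.U v) = σ.U (W₂ v)) → W₂ ρ.phi = σ.phi → W₂ = W) := by
  obtain ⟨T, hTgen, hTnorm⟩ := exists_clm hm ρ σ
  obtain ⟨T', hT'gen, hT'norm⟩ := exists_clm hm σ ρ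
  have hT'T : ∀ v, T' (T v) = v := by
    have heq : T'.comp T = ContinuousLinearMap.id ℂ H := by
      apply clm_eq_on_dense_span (dense_genSet ρ)
      rintro v ⟨n, f, hf, rfl⟩
      show T' (T (gen ρ n f)) = gen ρ n f
      rw [hTgen n f hf, hT'gen n f hf]
    intro v
    exact ContinuousLinearMap.ext_iff.mp heq v
  have hTT' : ∀ v, T (T' v) = v := by
    have heq : T.comp T' = ContinuousLinearMap.id ℂ K := by
      apply clm_eq_on_dense_span (dense_genSet σ)
      rintro v ⟨n, f, hf, rfl⟩
      show T (T' (gen σ n f)) = gen σ n f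
      rw [hT'gen n f hf, hTgen n f hf]
    intro v
    exact ContinuousLinearMap.ext_iff.mp heq v
  set W : H ≃ₗᵢ[ℂ] K :=
    { toLinearEquiv := LinearEquiv.ofLinear (T : H →ₗ[ℂ] K) (T' : K →ₗ[ℂ] H)
        (LinearMap.ext hTT') (LinearMap.ext hT'T)
      norm_map' := hTnorm } with hW
  have hWapp : ∀ v, W v = T v := fun _ => rfl
  have hWgen : ∀ (n : ℕ) (f : ℝ → ℂ), IsFilter f → W (gen ρ n f) = gen σ n f := by
    intro n f hf; rw [hWapp, hTgen n f hf]
  have hphi : W ρ.phi = σ.phi := by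
    rw [← gen_one_eq_phi ρ, hWgen 0 1 isFilter_one, gen_one_eq_phi σ]
  have hrep : ∀ f, IsFilter f → ∀ v, W (ρ.rep f v) = σ.rep f (W v) := by
    intro f hf
    have heq : T.comp (ρ.rep f) = (σ.rep f).comp T := by
      apply clm_eq_on_dense_span (dense_genSet ρ)
      rintro v ⟨n, g, hg, rfl⟩
      show T (ρ.rep f (gen ρ n g)) = σ.rep f (T (gen ρ n g))
      rw [rep_gen ρ n hf hg, hTgen n _ ((hf.dil' n).mul hg), hTgen n g hg,
        rep_gen σ n hf hg]
    intro v
    rw [hWapp, hWapp]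
    exact ContinuousLinearMap.ext_iff.mp heq v
  have hU : ∀ v, W (ρ.U v) = σ.U (W v) := by
    have heq : T.comp ρ.U.toLinearIsometry.toContinuousLinearMap =
        σ.U.toLinearIsometry.toContinuousLinearMap.comp T := by
      apply clm_eq_on_dense_span (dense_genSet ρ)
      rintro v ⟨n, g, hg, rfl⟩
      show T (ρ.U (gen ρ n g)) = σ.U (T (gen ρ n g))
      cases n with
      | zero =>
        rw [U_gen_zero ρ hm hg, hTgen 0 _ (((hg.dil' 1)).mul hm), hTgen 0 g hg,
          U_gen_zero σ hm hg]
      | succ n =>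
        rw [U_gen_succ ρ n g, hTgen n g hg, hTgen (n+1) g hg, U_gen_succ σ n g]
    intro v
    rw [hWapp, hWapp]
    exact ContinuousLinearMap.ext_iff.mp heq v
  refine ⟨W, hrep, hU, hphi, hWgen, ?_⟩
  intro W₂ h2rep h2U h2phi
  have h2gen := map_gen_of_props ρ σ W₂ h2rep h2U h2phi
  apply LinearIsometryEquiv.ext
  intro v
  have heq : W₂.toLinearIsometry.toContinuousLinearMap =
      W.toLinearIsometry.toContinuousLinearMap := by
    apply clm_eq_on_dense_span (dense_genSet ρ)
    rintro v ⟨n, f, hf, rfl⟩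
    show W₂ (gen ρ n f) = W (gen ρ n f)
    rw [h2gen n f hf, hWgen n f hf]
  exact ContinuousLinearMap.ext_iff.mp heq v

end Unitary
section Cross

variable {H H' : Type*} [NormedAddCommGroup H] [InnerProductSpace ℂ H] [CompleteSpace H]
  [NormedAddCommGroup H'] [InnerProductSpace ℂ H'] [CompleteSpace H']
variable {N : ℕ} {m₀ m₀' : ℝ → ℂ} {h h' : ℝ → ℝ} {h₀ : ℝ → ℂ}

/-- model values of the mixed inner products ⟪gen, S gen'⟫ -/
def crossGram (N : ℕ) (m₀ m₀' : ℝ → ℂ) (h₀ : ℝ → ℂ) (n m : ℕ) (f g : ℝ → ℂ) : ℂ :=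
  if m ≤ n then
    circleInt fun x =>
      ((fun t => conj (f t)) * (dil N (n - m) g * mp N m₀' (n - m))) x * h₀ x
  else
    circleInt fun x =>
      ((fun t => conj ((dil N (m - n) f * mp N m₀ (m - n)) t)) * g) x * h₀ x

lemma inner_gen_S (hm : IsFilter m₀) (hm' : IsFilter m₀')
    (ρ : CyclicRep N m₀ h H) (ρ' : CyclicRep N m₀' h' H') (S : H' →L[ℂ] H)
    (hSrep : ∀ f, IsFilter f → S.comp (ρ'.rep f) = (ρ.rep f).comp S)
    (hSU : ∀ v, S (ρ'.U v) = ρ.U (S v))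
    (hSmom : ∀ f, IsFilter f →
      ⟪ρ.phi, S (ρ'.rep f ρ'.phi)⟫ = circleInt fun x => f x * h₀ x)
    (n m : ℕ) {f g : ℝ → ℂ} (hf : IsFilter f) (hg : IsFilter g) :
    ⟪gen ρ n f, S (gen ρ' m g)⟫ = crossGram N m₀ m₀' h₀ n m f g := by
  have hSrep' : ∀ (F : ℝ → ℂ), IsFilter F → ∀ v, S (ρ'.rep F v) = ρ.rep F (S v) := by
    intro F hF v
    exact ContinuousLinearMap.ext_iff.mp (hSrep F hF) v
  have hSUsymm : ∀ v, S (ρ'.U.symm v) = ρ.U.symm (S v) := by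
    intro v
    apply ρ.U.injective
    rw [← hSU, ρ'.U.apply_symm_apply, ρ.U.apply_symm_apply]
  have hSiter : ∀ (k : ℕ) (v : H'),
      S ((fun w => ρ'.U.symm w)^[k] v) = (fun w => ρ.U.symm w)^[k] (S v) := by
    intro k
    induction k with
    | zero => intro v; rfl
    | succ k ih =>
      intro v
      rw [Function.iterate_succ_apply', Function.iterate_succ_apply', hSUsymm, ih]
  have hSUpw : ∀ (k : ℕ) (v : H'), S (Upw ρ' k v) = Upw ρ k (S v) := by
    intro k
    induction k with
    | zero => intro v; rfl
    | succ k ih =>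
      intro v
      show S ((fun w => ρ'.U w)^[k+1] v) = (fun w => ρ.U w)^[k+1] (S v)
      rw [Function.iterate_succ_apply', Function.iterate_succ_apply', hSU]
      exact congrArg _ (ih v)
  rcases le_or_gt m n with hmn | hmn
  · set k := n - m with hk
    have hG : IsFilter (dil N k g * mp N m₀' k) := (hg.dil' k).mul (hm'.mp' k)
    have e1 : gen ρ n f = (fun w => ρ.U.symm w)^[m] (gen ρ k f) := by
      have hmm : m + k = n := by omega
      rw [gen, gen, ← Function.iterate_add_apply, hmm]
    have e2 : S (gen ρ' m g) = (fun w => ρ.U.symm w)^[m] (S (ρ'.rep g ρ'.phi)) := by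
      rw [gen, hSiter]
    rw [e1, e2, inner_iter_iter, gen, inner_symm_iter, ← hSUpw, Upw_rep ρ' hg,
      Upw_phi ρ' hm', ← rep_apply_mul ρ' (hg.dil' k) (hm'.mp' k), inner_rep_left ρ hf]
    rw [show ρ.rep (fun t => conj (f t)) (S (ρ'.rep (dil N k g * mp N m₀' k) ρ'.phi))
        = S (ρ'.rep ((fun t => conj (f t)) * (dil N k g * mp N m₀' k)) ρ'.phi) by
      rw [hSrep' _ hG, ← rep_apply_mul ρ hf.conj' hG, ← hSrep' _ (hf.conj'.mul hG)]]
    rw [hSmom _ (hf.conj'.mul hG), crossGram, if_pos hmn]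
  · set k := m - n with hk
    have hF : IsFilter (dil N k f * mp N m₀ k) := (hf.dil' k).mul (hm.mp' k)
    have e1 : S (gen ρ' m g) =
        (fun w => ρ.U.symm w)^[n] ((fun w => ρ.U.symm w)^[k] (S (ρ'.rep g ρ'.phi))) := by
      have hmm : n + k = m := by omega
      rw [gen, hSiter, ← Function.iterate_add_apply, hmm]
    have e2 : gen ρ n f = (fun w => ρ.U.symm w)^[n] (ρ.rep f ρ.phi) := rfl
    rw [e1, e2, inner_iter_iter]
    have e3 : ⟪ρ.rep f ρ.phi, (fun w => ρ.U.symm w)^[k] (S (ρ'.rep g ρ'.phi))⟫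
        = ⟪Upw ρ k (ρ.rep f ρ.phi), S (ρ'.rep g ρ'.phi)⟫ := by
      rw [← inner_conj_symm, inner_symm_iter, inner_conj_symm]
    rw [e3, Upw_rep ρ hf, Upw_phi ρ hm, ← rep_apply_mul ρ (hf.dil' k) (hm.mp' k),
      inner_rep_left ρ hF]
    rw [show ρ.rep (fun t => conj ((dil N k f * mp N m₀ k) t)) (S (ρ'.rep g ρ'.phi))
        = S (ρ'.rep ((fun t => conj ((dil N k f * mp N m₀ k) t)) * g) ρ'.phi) by
      rw [hSrep' _ hg, ← rep_apply_mul ρ hF.conj' hg, ← hSrep' _ (hF.conj'.mul hg)]]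
    rw [hSmom _ (hF.conj'.mul hg), crossGram, if_neg (by omega)]

end Cross
/- STATEMENT 6 (Theorem `th2` of the paper): uniqueness, up to unitary equivalence, of the
pair (cyclic representations, intertwining operator) associated to `h`, `h'`, `h₀`. -/
theorem stmt_6 {H₁ H₂ H₁' H₂' : Type*}
    [NormedAddCommGroup H₁] [InnerProductSpace ℂ H₁] [CompleteSpace H₁]
    [NormedAddCommGroup H₂] [InnerProductSpace ℂ H₂] [CompleteSpace H₂]
    [NormedAddCommGroup H₁'] [InnerProductSpace ℂ H₁'] [CompleteSpace H₁']
    [NormedAddCommGroup H₂'] [InnerProductSpace ℂ H₂'] [CompleteSpace H₂']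
    (N : ℕ) (hN : 2 ≤ N) (m₀ m₀' : ℝ → ℂ)
    (hm₀ : IsFilter m₀) (hm₀' : IsFilter m₀')
    (hns : NonSingular m₀) (hns' : NonSingular m₀')
    (h h' : ℝ → ℝ)
    (hh1 : MemL1T fun x => (h x : ℂ)) (hhpos : ∀ x, 0 ≤ h x)
    (hh'1 : MemL1T fun x => (h' x : ℂ)) (hh'pos : ∀ x, 0 ≤ h' x)
    (hheig : ∀ᵐ ω ∂(volume : Measure ℝ), ruelle N m₀ m₀ (fun x => (h x : ℂ)) ω = (h ω : ℂ))
    (hh'eig : ∀ᵐ ω ∂(volume : Measure ℝ), ruelle N m₀' m₀' (fun x => (h' x : ℂ)) ω = (h' ω : ℂ))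
    (h₀ : ℝ → ℂ) (hh₀1 : MemL1T h₀)
    (hh₀eig : ∀ᵐ ω ∂(volume : Measure ℝ), ruelle N m₀ m₀' h₀ ω = h₀ ω)
    -- two cyclic representations for h, two for h', and intertwiners S₁, S₂
    (ρ₁ : CyclicRep N m₀ h H₁) (ρ₂ : CyclicRep N m₀ h H₂)
    (ρ₁' : CyclicRep N m₀' h' H₁') (ρ₂' : CyclicRep N m₀' h' H₂')
    (S₁ : H₁' →L[ℂ] H₁) (S₂ : H₂' →L[ℂ] H₂)
    (hS₁rep : ∀ f, IsFilter f → S₁.comp (ρ₁'.rep f) = (ρ₁.rep f).comp S₁)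
    (hS₂rep : ∀ f, IsFilter f → S₂.comp (ρ₂'.rep f) = (ρ₂.rep f).comp S₂)
    (hS₁U : ∀ v, S₁ (ρ₁'.U v) = ρ₁.U (S₁ v))
    (hS₂U : ∀ v, S₂ (ρ₂'.U v) = ρ₂.U (S₂ v))
    (hS₁mom : ∀ f, IsFilter f →
      ⟪ρ₁.phi, S₁ (ρ₁'.rep f ρ₁'.phi)⟫ = circleInt fun x => f x * h₀ x)
    (hS₂mom : ∀ f, IsFilter f →
      ⟪ρ₂.phi, S₂ (ρ₂'.rep f ρ₂'.phi)⟫ = circleInt fun x => f x * h₀ x) :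
    ∃ (W : H₁ ≃ₗᵢ[ℂ] H₂) (W' : H₁' ≃ₗᵢ[ℂ] H₂'),
      ((∀ f, IsFilter f → ∀ v, W (ρ₁.rep f v) = ρ₂.rep f (W v)) ∧
        (∀ v, W (ρ₁.U v) = ρ₂.U (W v)) ∧ W ρ₁.phi = ρ₂.phi ∧
        (∀ f, IsFilter f → ∀ v, W' (ρ₁'.rep f v) = ρ₂'.rep f (W' v)) ∧
        (∀ v, W' (ρ₁'.U v) = ρ₂'.U (W' v)) ∧ W' ρ₁'.phi = ρ₂'.phi ∧
        (∀ v, S₂ (W' v) = W (S₁ v))) ∧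
      ∀ (W₂ : H₁ ≃ₗᵢ[ℂ] H₂) (W₂' : H₁' ≃ₗᵢ[ℂ] H₂'),
        ((∀ f, IsFilter f → ∀ v, W₂ (ρ₁.rep f v) = ρ₂.rep f (W₂ v)) ∧
          (∀ v, W₂ (ρ₁.U v) = ρ₂.U (W₂ v)) ∧ W₂ ρ₁.phi = ρ₂.phi ∧
          (∀ f, IsFilter f → ∀ v, W₂' (ρ₁'.rep f v) = ρ₂'.rep f (W₂' v)) ∧
          (∀ v, W₂' (ρ₁'.U v) = ρ₂'.U (W₂' v)) ∧ W₂' ρ₁'.phi = ρ₂'.phi ∧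
          (∀ v, S₂ (W₂' v) = W₂ (S₁ v))) →
        W₂ = W ∧ W₂' = W' := by
  obtain ⟨W, hWrep, hWU, hWphi, hWgen, hWuniq⟩ := unitary_exists hm₀ ρ₁ ρ₂
  obtain ⟨W', hW'rep, hW'U, hW'phi, hW'gen, hW'uniq⟩ := unitary_exists hm₀' ρ₁' ρ₂'
  have hcross : ∀ v, S₂ (W' v) = W (S₁ v) := by
    have heq : S₂.comp W'.toLinearIsometry.toContinuousLinearMap =
        (W.toLinearIsometry.toContinuousLinearMap).comp S₁ := by
      apply clm_eq_on_dense_span (dense_genSet ρ₁')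
      rintro v ⟨m, g, hg, rfl⟩
      show S₂ (W' (gen ρ₁' m g)) = W (S₁ (gen ρ₁' m g))
      rw [hW'gen m g hg]
      have hd : S₂ (gen ρ₂' m g) - W (S₁ (gen ρ₁' m g)) = 0 := by
        apply vec_eq_zero_of_inner_dense_span (dense_genSet ρ₂)
        rintro u ⟨n, f, hf, rfl⟩
        show ⟪gen ρ₂ n f, S₂ (gen ρ₂' m g) - W (S₁ (gen ρ₁' m g))⟫ = 0
        rw [inner_sub_right]
        have c2 : ⟪gen ρ₂ n f, S₂ (gen ρ₂' m g)⟫ = crossGram N m₀ m₀' h₀ n m f g :=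
          inner_gen_S hm₀ hm₀' ρ₂ ρ₂' S₂ hS₂rep hS₂U hS₂mom n m hf hg
        have c1 : ⟪gen ρ₂ n f, W (S₁ (gen ρ₁' m g))⟫ =
            ⟪gen ρ₁ n f, S₁ (gen ρ₁' m g)⟫ := by
          rw [← hWgen n f hf, W.inner_map_map]
        rw [c2, c1, inner_gen_S hm₀ hm₀' ρ₁ ρ₁' S₁ hS₁rep hS₁U hS₁mom n m hf hg, sub_self]
      have := sub_eq_zero.mp hd
      exact this
    intro v
    exact ContinuousLinearMap.ext_iff.mp heq v
  refine ⟨W, W', ⟨hWrep, hWU, hWphi, hW'rep, hW'U, hW'phi, hcross⟩, ?_⟩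
  rintro W₂ W₂' ⟨a, b, c, d, e, f, -⟩
  exact ⟨hWuniq W₂ a b c, hW'uniq W₂' d e f⟩
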